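/- For t ≥ 5, a uniquely C_t-saturated graph contains no cycle of length 2t−2 and no cycle of length 2t−4. -/

import Mathlib

open SimpleGraph

/-- `G` has a cycle on `t` vertices (a cycle of length `t`). -/
def HasCycleOn {V : Type*} (G : SimpleGraph V) (t : ℕ) : Prop :=
  ∃ (v : V) (w : G.Walk v v), w.IsCycle ∧ w.length = t

/-- `c` is the edge set of some cycle on `t` vertices in `G`. -/
def IsCtEdgeSet {V : Type*} (G : SimpleGraph V) (t : ℕ) (c : Set (Sym2 V)) : Prop :=
  ∃ (v : V) (w : G.Walk v v), w.IsCycle ∧ w.length = t ∧ {e | e ∈ w.edges} = c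

/-- `G` is uniquely `C_t`-saturated: it has no cycle on `t` vertices, and adding any
edge of the complement creates exactly one cycle on `t` vertices. -/
def UniquelyCSat {V : Type*} (G : SimpleGraph V) (t : ℕ) : Prop :=
  ¬ HasCycleOn G t ∧
    ∀ x y : V, x ≠ y → ¬ G.Adj x y →
      ∃! c : Set (Sym2 V), IsCtEdgeSet (G ⊔ fromEdgeSet {s(x, y)}) t c

namespace UCSatProof

open SimpleGraph Walk

variable {V : Type*}

/-! ### Cyclic indexing structures -/

/-- A packaged cyclic structure: a cyclically indexed family of vertices forming a
cycle of length `n` in `G`. -/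
structure Cyc (G : SimpleGraph V) (n : ℕ) where
  v : ℕ → V
  adj : ∀ i, G.Adj (v i) (v (i + 1))
  inj : ∀ i j, i < n → j < n → v i = v j → i = j
  vmod : ∀ i, v (i % n) = v i

namespace Cyc

variable {G : SimpleGraph V} {n : ℕ} (c : Cyc G n)

lemma veq_of_mod {i j : ℕ} (h : i % n = j % n) : c.v i = c.v j := by
  rw [← c.vmod i, ← c.vmod j, h]

lemma vn : c.v n = c.v 0 := (c.veq_of_mod (by simp)).symm

lemma mod_of_veq (hn : 0 < n) {i j : ℕ} (h : c.v i = c.v j) : i % n = j % n := by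
  refine c.inj (i % n) (j % n) (Nat.mod_lt _ hn) (Nat.mod_lt _ hn) ?_
  rw [c.vmod, c.vmod]; exact h

lemma veq_low (hn : 0 < n) {i j : ℕ} (hi : i < n) (hj : j < n) (h : c.v i = c.v j) :
    i = j := by
  have := c.mod_of_veq hn h
  rwa [Nat.mod_eq_of_lt hi, Nat.mod_eq_of_lt hj] at this

/-- Shift the base point of a cyclic structure. -/
def shift (k : ℕ) : Cyc G n where
  v i := c.v (k + i)
  adj i := c.adj (k + i)
  inj i j hi hj h := by
    have hn : 0 < n := lt_of_le_of_lt (Nat.zero_le _) hi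
    have h2 : (k + i) % n = (k + j) % n := c.mod_of_veq hn h
    have h3 : i % n = j % n := Nat.ModEq.add_left_cancel' k h2
    rwa [Nat.mod_eq_of_lt hi, Nat.mod_eq_of_lt hj] at h3
  vmod i := by
    refine c.veq_of_mod ?_
    exact Nat.add_mod_mod k i n

/-- `x` lies on the cycle. -/
def onC (x : V) : Prop := ∃ i, x = c.v i

lemma onC_norm (hn : 0 < n) {x : V} (h : c.onC x) : ∃ i, i < n ∧ x = c.v i := by
  obtain ⟨i, rfl⟩ := h
  exact ⟨i % n, Nat.mod_lt _ hn, (c.vmod i).symm⟩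

lemma onC_shift {k : ℕ} {x : V} (h : ¬ c.onC x) : ∀ j, x ≠ (c.shift k).v j := by
  intro j hj
  exact h ⟨k + j, hj⟩

/-! ### Arcs along the cycle -/

/-- The walk along the cycle from `v a` to `v (a+k)` in the increasing direction. -/
def arc (a : ℕ) : (k : ℕ) → G.Walk (c.v a) (c.v (a + k))
  | 0 => Walk.nil
  | (k + 1) => Walk.concat (arc a k) (c.adj (a + k))

@[simp] lemma arc_length (a k : ℕ) : (c.arc a k).length = k := by
  induction k with
  | zero => rfl
  | succ k ih => rw [arc, Walk.length_concat, ih]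

lemma arc_support (a k : ℕ) :
    (c.arc a k).support = (List.range (k + 1)).map (fun j => c.v (a + j)) := by
  induction k with
  | zero => rw [List.range_succ]; simp [arc]
  | succ k ih =>
    rw [arc, Walk.support_concat, ih]
    simp [List.range_succ, List.concat_eq_append]

lemma mem_arc_support {a k : ℕ} {x : V} :
    x ∈ (c.arc a k).support ↔ ∃ j, j ≤ k ∧ x = c.v (a + j) := by
  rw [arc_support]
  simp [List.mem_map, Nat.lt_succ_iff, eq_comm]

lemma arc_edges (a k : ℕ) :
    (c.arc a k).edges = (List.range k).map (fun j => s(c.v (a + j), c.v (a + j + 1))) := by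
  induction k with
  | zero => simp [arc]
  | succ k ih =>
    rw [arc, Walk.edges_concat, ih]
    simp only [List.range_succ, List.concat_eq_append, List.map_append, List.map_cons,
      List.map_nil]
    rfl

lemma mem_arc_edges {a k j : ℕ} (hj : j < k) :
    s(c.v (a + j), c.v (a + j + 1)) ∈ (c.arc a k).edges := by
  rw [arc_edges]
  exact List.mem_map.2 ⟨j, List.mem_range.2 hj, rfl⟩

lemma arc_isPath {k : ℕ} (hk : k < n) (a : ℕ) : (c.arc a k).IsPath := by
  rw [Walk.isPath_def, arc_support]
  have hn : 0 < n := lt_of_le_of_lt (Nat.zero_le _) hk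
  refine List.Nodup.map_on ?_ List.nodup_range
  intro j1 h1 j2 h2 hv
  rw [List.mem_range] at h1 h2
  have h3 : (a + j1) % n = (a + j2) % n := c.mod_of_veq hn hv
  have h4 : j1 % n = j2 % n := Nat.ModEq.add_left_cancel' a h3
  rwa [Nat.mod_eq_of_lt (by omega), Nat.mod_eq_of_lt (by omega)] at h4

end Cyc


/-! ### The key uniqueness lemmas -/

section Star

variable {G : SimpleGraph V} {t : ℕ}

lemma path_self_edge_not_mem {x y : V} (p : G.Walk x y) (hp : p.IsPath) (hl : 2 ≤ p.length) :
    s(x, y) ∉ p.edges := by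
  intro hmem
  cases p with
  | nil => simp at hl
  | @cons _ b _ h q =>
    rw [Walk.edges_cons, List.mem_cons] at hmem
    rw [Walk.cons_isPath_iff] at hp
    rcases hmem with heq | hmem
    · rw [Sym2.eq_iff] at heq
      rcases heq with ⟨-, rfl⟩ | ⟨rfl, rfl⟩
      · have : q = Walk.nil := Walk.isPath_iff_eq_nil.1 hp.1
        subst this
        simp [Walk.length_cons] at hl
      · exact h.ne rfl
    · exact hp.2 (Walk.fst_mem_support_of_mem_edges q hmem)

/-- If `x, y` are adjacent and there is a path of length `t-1` between them,
`G` has a `t`-cycle: contradiction. -/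
lemma no_path_adj (hG : UniquelyCSat G t) (ht : 5 ≤ t) {x y : V} (hadj : G.Adj x y)
    (p : G.Walk x y) (hp : p.IsPath) (hl : p.length = t - 1) : False := by
  have h2 : 2 ≤ p.length := by omega
  have hne : s(y, x) ∉ p.edges := by
    rw [Sym2.eq_swap]
    exact path_self_edge_not_mem p hp h2
  have hcyc : (Walk.cons hadj.symm p).IsCycle := by
    rw [Walk.cons_isCycle_iff]
    exact ⟨hp, hne⟩
  exact hG.1 ⟨y, Walk.cons hadj.symm p, hcyc, by rw [Walk.length_cons]; omega⟩

/-- Two distinct paths of length `t-1` between the same pair of vertices contradict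
unique saturation. -/
lemma no_two_paths (hG : UniquelyCSat G t) (ht : 5 ≤ t) {x y : V} (hne : x ≠ y)
    (p q : G.Walk x y) (hp : p.IsPath) (hq : q.IsPath)
    (hpl : p.length = t - 1) (hql : q.length = t - 1)
    (e0 : Sym2 V) (hep : e0 ∈ p.edges) (heq : e0 ∉ q.edges) : False := by
  by_cases hadj : G.Adj x y
  · exact no_path_adj hG ht hadj p hp hpl
  obtain ⟨c0, -, huniq⟩ := hG.2 x y hne hadj
  set G' := G ⊔ fromEdgeSet {s(x, y)} with hG'def
  have hsub : ∀ (r : G.Walk x y), ∀ e ∈ r.edges, e ∈ G'.edgeSet := fun r e he =>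
    edgeSet_mono le_sup_left (r.edges_subset_edgeSet he)
  have hyx : G'.Adj y x := by
    rw [hG'def, sup_adj]
    refine Or.inr ?_
    rw [fromEdgeSet_adj]
    exact ⟨by rw [Sym2.eq_swap]; exact Set.mem_singleton _, fun h => hne h.symm⟩
  have hnotG : s(y, x) ∉ G.edgeSet := by
    rw [Sym2.eq_swap]
    exact fun h => hadj h
  have key : ∀ (r : G.Walk x y), r.IsPath → r.length = t - 1 →
      IsCtEdgeSet G' t {e | e ∈ (Walk.cons hyx (r.transfer G' (hsub r))).edges} := by
    intro r hr hrl
    refine ⟨y, Walk.cons hyx (r.transfer G' (hsub r)), ?_, ?_, rfl⟩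
    · rw [Walk.cons_isCycle_iff]
      refine ⟨hr.transfer _, ?_⟩
      rw [Walk.edges_transfer]
      exact fun h => hnotG (r.edges_subset_edgeSet h)
    · rw [Walk.length_cons, Walk.length_transfer]
      omega
  have h1 := huniq _ (key p hp hpl)
  have h2 := huniq _ (key q hq hql)
  have hset := h1.trans h2.symm
  have he1 : e0 ∈ {e | e ∈ (Walk.cons hyx (p.transfer G' (hsub p))).edges} := by
    simp only [Set.mem_setOf_eq, Walk.edges_cons, List.mem_cons, Walk.edges_transfer]
    exact Or.inr hep
  rw [hset] at he1
  simp only [Set.mem_setOf_eq, Walk.edges_cons, List.mem_cons, Walk.edges_transfer] at he1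
  rcases he1 with he1 | he1
  · subst he1
    exact hnotG (p.edges_subset_edgeSet hep)
  · exact heq he1

end Star

/-! ### Killing chords and attachments of a cycle of length 2d -/

section Kill

variable {G : SimpleGraph V} {t d : ℕ}

/-- No chord of odd span `s` (`3 ≤ s ≤ d`) on a cycle of length `2d`. -/
lemma kill_odd (hG : UniquelyCSat G t) (ht : 5 ≤ t) (c : Cyc G (2 * d)) (hd : 3 ≤ d)
    (htd : t = d + 2) {s : ℕ} (hs3 : 3 ≤ s) (hsd : s ≤ d) (hodd : s % 2 = 1)
    (hchord : G.Adj (c.v 0) (c.v s)) : False := by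
  have hn : 0 < 2 * d := by omega
  obtain ⟨a, rfl⟩ : ∃ a, s = 2 * a + 1 := ⟨s / 2, by omega⟩
  set s := 2 * a + 1 with hs_def
  have ha1 : 1 ≤ a := by omega
  have had : a ≤ d - 2 := by omega
  -- the two paths between `v a` and `v (a + (d+1))`
  have hne : c.v a ≠ c.v (a + (d + 1)) := by
    intro h
    have := c.veq_low hn (by omega) (by omega) h
    omega
  -- path 1 : the long arc
  have hp1 : (c.arc a (d + 1)).IsPath := c.arc_isPath (by omega) a
  -- path 2 : back from a to 0, chord, forward from s
  have hend : c.v (s + (d - a)) = c.v (a + (d + 1)) := congrArg c.v (by omega)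
  have hstart : c.v (0 + a) = c.v a := congrArg c.v (by omega)
  let q1 : G.Walk (c.v a) (c.v 0) := ((c.arc 0 a).copy rfl hstart).reverse
  let q2 : G.Walk (c.v 0) (c.v (s + (d - a))) := Walk.cons hchord (c.arc s (d - a))
  let p2 : G.Walk (c.v a) (c.v (a + (d + 1))) := (q1.append q2).copy rfl hend
  have hp2sup : p2.support = ((c.arc 0 a).support).reverse ++ (c.arc s (d - a)).support := by
    simp only [p2, q1, q2, Walk.support_copy, Walk.support_append, Walk.support_reverse,
      Walk.support_cons, List.tail_cons]
  have hp2 : p2.IsPath := by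
    rw [Walk.isPath_def, hp2sup]
    refine List.Nodup.append ?_ ?_ ?_
    · exact List.nodup_reverse.2 ((c.arc_isPath (by omega) 0).support_nodup)
    · exact (c.arc_isPath (by omega) s).support_nodup
    · intro x hx1 hx2
      rw [List.mem_reverse] at hx1
      rw [c.mem_arc_support] at hx1 hx2
      obtain ⟨j1, hj1, rfl⟩ := hx1
      obtain ⟨j2, hj2, h⟩ := hx2
      have := c.veq_low hn (by omega) (by omega) h
      omega
  have hp2len : p2.length = t - 1 := by
    simp only [p2, q1, q2, Walk.length_copy, Walk.length_append, Walk.length_reverse,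
      Walk.length_cons, c.arc_length]
    omega
  -- the chord edge distinguishes the two paths
  have hechord : s(c.v 0, c.v s) ∈ p2.edges := by
    simp only [p2, q1, q2, Walk.edges_copy, Walk.edges_append, Walk.edges_cons,
      List.mem_append, List.mem_cons]
    tauto
  have hnechord : s(c.v 0, c.v s) ∉ (c.arc a (d + 1)).edges := by
    intro h
    have h0 : c.v 0 ∈ (c.arc a (d + 1)).support :=
      Walk.fst_mem_support_of_mem_edges _ h
    rw [c.mem_arc_support] at h0
    obtain ⟨j, hj, h0⟩ := h0
    have := c.veq_low hn (by omega) (by omega) h0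
    omega
  exact no_two_paths hG ht hne p2 (c.arc a (d + 1)) hp2 hp1 hp2len
    (by rw [c.arc_length]; omega) _ hechord hnechord

/-- No chord of even span `2a` (`1 ≤ a`, `2a ≤ d`) on a cycle of length `2d`. -/
lemma kill_even (hG : UniquelyCSat G t) (ht : 5 ≤ t) (c : Cyc G (2 * d)) (hd : 3 ≤ d)
    (htd : t = d + 2) {a : ℕ} (ha : 1 ≤ a) (h2a : 2 * a ≤ d)
    (hchord : G.Adj (c.v 0) (c.v (2 * a))) : False := by
  have hn : 0 < 2 * d := by omega
  have hne : c.v a ≠ c.v (a + d) := by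
    intro h
    have := c.veq_low hn (by omega) (by omega) h
    omega
  -- path 1 : back from a to 0, chord, forward from 2a to a+d
  have hend1 : c.v (2 * a + (d - a)) = c.v (a + d) := congrArg c.v (by omega)
  have hstart : c.v (0 + a) = c.v a := congrArg c.v (by omega)
  let q1 : G.Walk (c.v a) (c.v 0) := ((c.arc 0 a).copy rfl hstart).reverse
  let q2 : G.Walk (c.v 0) (c.v (2 * a + (d - a))) := Walk.cons hchord (c.arc (2 * a) (d - a))
  let p1 : G.Walk (c.v a) (c.v (a + d)) := (q1.append q2).copy rfl hend1
  have hp1sup : p1.support = ((c.arc 0 a).support).reverse ++ (c.arc (2 * a) (d - a)).support := by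
    simp only [p1, q1, q2, Walk.support_copy, Walk.support_append, Walk.support_reverse,
      Walk.support_cons, List.tail_cons]
  have hp1 : p1.IsPath := by
    rw [Walk.isPath_def, hp1sup]
    refine List.Nodup.append ?_ ?_ ?_
    · exact List.nodup_reverse.2 ((c.arc_isPath (by omega) 0).support_nodup)
    · exact (c.arc_isPath (by omega) (2 * a)).support_nodup
    · intro x hx1 hx2
      rw [List.mem_reverse] at hx1
      rw [c.mem_arc_support] at hx1 hx2
      obtain ⟨j1, hj1, rfl⟩ := hx1
      obtain ⟨j2, hj2, h⟩ := hx2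
      have := c.veq_low hn (by omega) (by omega) h
      omega
  have hp1len : p1.length = t - 1 := by
    simp only [p1, q1, q2, Walk.length_copy, Walk.length_append, Walk.length_reverse,
      Walk.length_cons, c.arc_length]
    omega
  -- path 2 : forward from a to 2a, chord back, backward from 0 (= 2d) down to a+d
  have hmid : c.v (a + a) = c.v (2 * a) := congrArg c.v (by omega)
  have hwrap : c.v (a + d + (d - a)) = c.v 0 := by
    refine (congrArg c.v (by omega : a + d + (d - a) = 2 * d)).trans c.vn
  let r1 : G.Walk (c.v a) (c.v (2 * a)) := (c.arc a a).copy rfl hmid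
  let rback : G.Walk (c.v 0) (c.v (a + d)) := ((c.arc (a + d) (d - a)).copy rfl hwrap).reverse
  let p2 : G.Walk (c.v a) (c.v (a + d)) := r1.append (Walk.cons hchord.symm rback)
  have hp2sup : p2.support = (c.arc a a).support ++ ((c.arc (a + d) (d - a)).support).reverse := by
    simp only [p2, r1, rback, Walk.support_append, Walk.support_cons, Walk.support_copy,
      Walk.support_reverse, List.tail_cons]
  have hp2 : p2.IsPath := by
    rw [Walk.isPath_def, hp2sup]
    refine List.Nodup.append ?_ ?_ ?_
    · exact (c.arc_isPath (by omega) a).support_nodup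
    · exact List.nodup_reverse.2 ((c.arc_isPath (by omega) (a + d)).support_nodup)
    · intro x hx1 hx2
      rw [List.mem_reverse] at hx2
      rw [c.mem_arc_support] at hx1 hx2
      obtain ⟨j1, hj1, rfl⟩ := hx1
      obtain ⟨j2, hj2, h⟩ := hx2
      have h1 : (a + j1) % (2 * d) = (a + d + j2) % (2 * d) := c.mod_of_veq hn h
      have e1 : (a + j1) % (2 * d) = a + j1 := Nat.mod_eq_of_lt (by omega)
      by_cases hc : a + d + j2 < 2 * d
      · rw [Nat.mod_eq_of_lt hc] at h1
        omega
      · have h2 : a + d + j2 = 2 * d := by omega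
        rw [h2, Nat.mod_self] at h1
        omega
  have hp2len : p2.length = t - 1 := by
    simp only [p2, r1, rback, Walk.length_append, Walk.length_cons, Walk.length_copy,
      Walk.length_reverse, c.arc_length]
    omega
  -- distinguishing edge: the last edge of the backward segment
  have hed : s(c.v (a + d + (d - a - 1)), c.v (a + d + (d - a - 1) + 1)) ∈ p2.edges := by
    simp only [p2, r1, rback, Walk.edges_append, Walk.edges_cons, Walk.edges_copy,
      Walk.edges_reverse, List.mem_append, List.mem_cons, List.mem_reverse]
    exact Or.inr (Or.inr (c.mem_arc_edges (by omega)))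
  have hned : s(c.v (a + d + (d - a - 1)), c.v (a + d + (d - a - 1) + 1)) ∉ p1.edges := by
    intro h
    have h0 : c.v (a + d + (d - a - 1)) ∈ p1.support :=
      Walk.fst_mem_support_of_mem_edges _ h
    rw [hp1sup, List.mem_append, List.mem_reverse] at h0
    have h2d1 : a + d + (d - a - 1) = 2 * d - 1 := by omega
    rcases h0 with h0 | h0 <;> rw [c.mem_arc_support] at h0 <;>
      obtain ⟨j, hj, h0⟩ := h0
    · have := c.veq_low hn (by omega) (by omega) h0.symm
      omega
    · have := c.veq_low hn (by omega) (by omega) h0.symm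
      omega
  exact no_two_paths hG ht hne p2 p1 hp2 hp1 hp2len hp1len _ hed hned

/-- Any chord of span `2 ≤ s ≤ d` is impossible. -/
lemma kill_span (hG : UniquelyCSat G t) (ht : 5 ≤ t) (c : Cyc G (2 * d)) (hd : 3 ≤ d)
    (htd : t = d + 2) {s : ℕ} (hs2 : 2 ≤ s) (hsd : s ≤ d)
    (hchord : G.Adj (c.v 0) (c.v s)) : False := by
  rcases Nat.even_or_odd s with he | ho
  · rw [Nat.even_iff] at he
    obtain ⟨a, rfl⟩ : ∃ a, s = 2 * a := ⟨s / 2, by omega⟩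
    exact kill_even hG ht c hd htd (by omega) (by omega) hchord
  · rw [Nat.odd_iff] at ho
    exact kill_odd hG ht c hd htd (by omega) hsd (by omega) hchord

/-- No vertex off the cycle is adjacent to a vertex of the cycle. -/
lemma kill_out (hG : UniquelyCSat G t) (ht : 5 ≤ t) (c : Cyc G (2 * d)) (hd : 3 ≤ d)
    (htd : t = d + 2) {x : V} (hx : ∀ i, x ≠ c.v i)
    (hadj : G.Adj x (c.v 0)) : False := by
  have hn : 0 < 2 * d := by omega
  have hne : x ≠ c.v (0 + d) := hx (0 + d)
  -- path 1 : x, then forward arc 0 → d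
  let p1 : G.Walk x (c.v (0 + d)) := Walk.cons hadj (c.arc 0 d)
  have hp1 : p1.IsPath := by
    rw [Walk.cons_isPath_iff]
    refine ⟨c.arc_isPath (by omega) 0, fun h => ?_⟩
    rw [c.mem_arc_support] at h
    obtain ⟨j, hj, h⟩ := h
    exact hx _ h
  -- path 2 : x, then backward arc 0 = 2d → d
  have hwrap : c.v (d + d) = c.v 0 := by
    refine (congrArg c.v (by omega : d + d = 2 * d)).trans c.vn
  let rback : G.Walk (c.v 0) (c.v d) := ((c.arc d d).copy rfl hwrap).reverse
  let p2 : G.Walk x (c.v (0 + d)) := (Walk.cons hadj rback).copy rfl (congrArg c.v (by omega))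
  have hp2 : p2.IsPath := by
    simp only [p2, Walk.isPath_copy]
    rw [Walk.cons_isPath_iff]
    constructor
    · simp only [rback, Walk.isPath_reverse_iff, Walk.isPath_copy]
      exact c.arc_isPath (by omega) d
    · intro h
      simp only [rback, Walk.support_reverse, Walk.support_copy, List.mem_reverse] at h
      rw [c.mem_arc_support] at h
      obtain ⟨j, hj, h⟩ := h
      exact hx _ h
  have hp1len : p1.length = t - 1 := by
    simp only [p1, Walk.length_cons, c.arc_length]
    omega
  have hp2len : p2.length = t - 1 := by
    simp only [p2, rback, Walk.length_copy, Walk.length_cons, Walk.length_reverse, c.arc_length]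
    omega
  -- distinguishing edge : s(v 0, v 1) ∈ p1 only
  have hed : s(c.v (0 + 0), c.v (0 + 0 + 1)) ∈ p1.edges := by
    simp only [p1, Walk.edges_cons, List.mem_cons]
    exact Or.inr (c.mem_arc_edges (by omega))
  have hv01 : s(c.v (0 + 0), c.v (0 + 0 + 1)) = s(c.v 0, c.v 1) := by norm_num
  have hned : s(c.v (0 + 0), c.v (0 + 0 + 1)) ∉ p2.edges := by
    rw [hv01]
    intro h
    have h1 : c.v 1 ∈ p2.support := Walk.snd_mem_support_of_mem_edges _ h
    simp only [p2, Walk.support_copy, Walk.support_cons, List.mem_cons, rback,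
      Walk.support_reverse, List.mem_reverse] at h1
    rcases h1 with h1 | h1
    · exact hx _ h1.symm
    · rw [c.mem_arc_support] at h1
      obtain ⟨j, hj, h1⟩ := h1
      by_cases hc : d + j < 2 * d
      · have := c.veq_low hn (by omega) (by omega) h1
        omega
      · have h2 : d + j = 2 * d := by omega
        rw [h2] at h1
        have h3 : c.v 1 = c.v 0 := h1.trans c.vn
        have := c.veq_low hn (by omega) (by omega) h3
        omega
  exact no_two_paths hG ht hne p1 p2 hp1 hp2 hp1len hp2len _ hed hned

/-- Any edge of `G` between two cycle vertices joins consecutive ones. -/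
lemma adj_classify (hG : UniquelyCSat G t) (ht : 5 ≤ t) (c : Cyc G (2 * d)) (hd : 3 ≤ d)
    (htd : t = d + 2) {i j : ℕ} (hi : i < 2 * d) (hj : j < 2 * d)
    (hadj : G.Adj (c.v i) (c.v j)) : j = (i + 1) % (2 * d) ∨ i = (j + 1) % (2 * d) := by
  have hn : 0 < 2 * d := by omega
  have hij : i ≠ j := by
    intro h; subst h; exact hadj.ne rfl
  set k := (j + 2 * d - i) % (2 * d) with hk_def
  have hk_eq : (i ≤ j ∧ k = j - i) ∨ (j < i ∧ k = j + 2 * d - i) := by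
    rcases le_or_gt i j with h | h
    · left
      refine ⟨h, ?_⟩
      rw [hk_def]
      have h2 : j + 2 * d - i = (j - i) + 2 * d := by omega
      rw [h2, Nat.add_mod_right, Nat.mod_eq_of_lt (by omega)]
    · right
      refine ⟨h, ?_⟩
      rw [hk_def, Nat.mod_eq_of_lt (by omega)]
  have hvk : (c.shift i).v k = c.v j := by
    show c.v (i + k) = c.v j
    rcases hk_eq with ⟨h, hk⟩ | ⟨h, hk⟩
    · exact congrArg c.v (by omega)
    · refine c.veq_of_mod ?_
      have h2 : i + k = j + 2 * d := by omega
      rw [h2, Nat.add_mod_right]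
  by_cases hk1 : k = 1
  · left
    rcases hk_eq with ⟨h, hk⟩ | ⟨h, hk⟩
    · rw [Nat.mod_eq_of_lt (by omega)]
      omega
    · have h2 : i + 1 = 2 * d := by omega
      rw [h2, Nat.mod_self]
      omega
  by_cases hk2 : k = 2 * d - 1
  · right
    rcases hk_eq with ⟨h, hk⟩ | ⟨h, hk⟩
    · have h2 : j + 1 = 2 * d := by omega
      rw [h2, Nat.mod_self]
      omega
    · rw [Nat.mod_eq_of_lt (by omega)]
      omega
  exfalso
  rcases le_or_gt k d with hkd | hkd
  · refine kill_span hG ht (c.shift i) hd htd (show 2 ≤ k by rcases hk_eq with ⟨h, hk⟩ | ⟨h, hk⟩ <;> omega) hkd ?_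
    show G.Adj (c.v (i + 0)) (c.v (i + k))
    rw [Nat.add_zero]
    have hvk' : c.v (i + k) = c.v j := hvk
    rw [hvk']
    exact hadj
  · set k' := 2 * d - k with hk'_def
    have hvk2 : (c.shift j).v k' = c.v i := by
      show c.v (j + k') = c.v i
      rcases hk_eq with ⟨h, hk⟩ | ⟨h, hk⟩
      · refine c.veq_of_mod ?_
        have h2 : j + k' = i + 2 * d := by omega
        rw [h2, Nat.add_mod_right]
      · exact congrArg c.v (by omega)
    refine kill_span hG ht (c.shift j) hd htd
      (show 2 ≤ k' by omega)
      (show k' ≤ d by omega) ?_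
    show G.Adj (c.v (j + 0)) (c.v (j + k'))
    rw [Nat.add_zero]
    have hvk2' : c.v (j + k') = c.v i := hvk2
    rw [hvk2']
    exact hadj.symm

end Kill

/-! ### Extracting a cyclic structure from a cycle walk -/

section Extract

variable {G : SimpleGraph V}

lemma support_getElem_eq_getVert {u v : V} (p : G.Walk u v) :
    ∀ (i : ℕ) (h : i < p.support.length), p.support[i] = p.getVert i := by
  induction p with
  | nil =>
    intro i h
    simp only [Walk.support_nil, List.length_cons, List.length_nil] at h
    interval_cases i
    rfl
  | cons hadj q ih =>
    intro i h
    cases i with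
    | zero => rfl
    | succ i =>
      simp only [Walk.support_cons, List.getElem_cons_succ, Walk.getVert_cons_succ]
      exact ih i (by simp only [Walk.support_cons, List.length_cons] at h; omega)

/-- Build a cyclic structure from a cycle walk of length `n`. -/
def mkCyc {n : ℕ} {r : V} (w : G.Walk r r) (hw : w.IsCycle) (hl : w.length = n) :
    Cyc G n where
  v i := w.getVert (i % n)
  adj i := by
    have h3 : 3 ≤ n := hl ▸ hw.three_le_length
    set k := i % n with hk_def
    have hk : k < n := Nat.mod_lt _ (by omega)
    show G.Adj (w.getVert k) (w.getVert ((i + 1) % n))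
    have hmod : (i + 1) % n = (k + 1) % n := by
      rw [Nat.add_mod i 1 n, Nat.mod_eq_of_lt (show 1 < n by omega), ← hk_def]
    by_cases hc : k + 1 < n
    · rw [hmod, Nat.mod_eq_of_lt hc]
      exact w.adj_getVert_succ (by omega)
    · have hkn : k + 1 = n := by omega
      rw [hmod, hkn, Nat.mod_self]
      have h0 : w.getVert 0 = w.getVert n := by
        rw [Walk.getVert_zero, ← hl, Walk.getVert_length]
      rw [h0, ← hkn]
      exact w.adj_getVert_succ (by omega)
  inj i j hi hj h := by
    have h3 : 3 ≤ n := hl ▸ hw.three_le_length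
    rw [Nat.mod_eq_of_lt hi, Nat.mod_eq_of_lt hj] at h
    have hlen : w.support.length = n + 1 := by rw [Walk.length_support, hl]
    have htl : w.support.tail.length = n := by rw [List.length_tail, hlen]; omega
    have hnd : w.support.tail.Nodup := hw.support_nodup
    have hget : ∀ k, k < n → ∀ (hk' : k < w.support.tail.length),
        w.support.tail[k] = w.getVert (k + 1) := by
      intro k hk hk'
      rw [List.getElem_tail]
      exact support_getElem_eq_getVert w (k + 1) (by omega)
    have hvn : w.getVert n = w.getVert 0 := by
      rw [Walk.getVert_zero, ← hl, Walk.getVert_length]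
    set i' := if i = 0 then n else i with hi'_def
    set j' := if j = 0 then n else j with hj'_def
    have hgi : w.getVert i' = w.getVert i := by
      rw [hi'_def]; split_ifs with hc
      · rw [hc, hvn]
      · rfl
    have hgj : w.getVert j' = w.getVert j := by
      rw [hj'_def]; split_ifs with hc
      · rw [hc, hvn]
      · rfl
    have hbi : 1 ≤ i' ∧ i' ≤ n := by rw [hi'_def]; split_ifs <;> omega
    have hbj : 1 ≤ j' ∧ j' ≤ n := by rw [hj'_def]; split_ifs <;> omega
    have h1 : w.support.tail[i' - 1]'(by omega) = w.support.tail[j' - 1]'(by omega) := by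
      have e1 := hget (i' - 1) (by omega) (by omega)
      have e2 := hget (j' - 1) (by omega) (by omega)
      rw [Nat.sub_add_cancel hbi.1] at e1
      rw [Nat.sub_add_cancel hbj.1] at e2
      rw [e1, e2, hgi, hgj, h]
    have h2 : i' - 1 = j' - 1 := hnd.getElem_inj_iff.1 h1
    have h4 : i' = j' := by omega
    rw [hi'_def, hj'_def] at h4
    revert h4
    split_ifs <;> omega
  vmod i := by
    show w.getVert (i % n % n) = w.getVert (i % n)
    rw [Nat.mod_mod]

end Extract

/-! ### Parity tools -/

section Parity

lemma support_closure {H : SimpleGraph V} (P : V → Prop)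
    (hstep : ∀ a b, H.Adj a b → P a → P b) :
    ∀ {u w : V} (p : H.Walk u w), P u → ∀ y ∈ p.support, P y := by
  intro u w p
  induction p with
  | nil =>
    intro hu y hy
    rw [Walk.support_nil, List.mem_singleton] at hy
    rwa [hy]
  | cons h q ih =>
    intro hu y hy
    rw [Walk.support_cons, List.mem_cons] at hy
    rcases hy with rfl | hy
    · exact hu
    · exact ih (hstep _ _ h hu) y hy

lemma parity_walk {H : SimpleGraph V} (f : V → ZMod 2) (wt : Sym2 V → ZMod 2) :
    ∀ {u w : V} (p : H.Walk u w),
      (∀ e ∈ p.edges, ∀ x y : V, e = s(x, y) → f y = f x + wt e) →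
      f w = f u + (p.edges.map wt).sum := by
  intro u w p
  induction p with
  | nil => intro _; simp
  | @cons u b w h q ih =>
    intro hyp
    have hb : f b = f u + wt s(u, b) :=
      hyp s(u, b) (by rw [Walk.edges_cons]; exact List.mem_cons_self) u b rfl
    have hq := ih (fun e he x y hxy => hyp e (by rw [Walk.edges_cons]; exact List.mem_cons_of_mem _ he) x y hxy)
    rw [Walk.edges_cons, List.map_cons, List.sum_cons, hq, hb]
    ring

lemma sum_map_ones {α : Type*} (wt : α → ZMod 2) :
    ∀ (l : List α), (∀ x ∈ l, wt x = 1) → (l.map wt).sum = (l.length : ZMod 2) := by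
  intro l
  induction l with
  | nil => intro _; simp
  | cons a l ih =>
    intro h
    rw [List.map_cons, List.sum_cons, ih (fun x hx => h x (List.mem_cons_of_mem _ hx)),
      h a List.mem_cons_self, List.length_cons]
    push_cast
    ring

lemma cast_mod_two {n : ℕ} (hn : 2 ∣ n) (m : ℕ) : ((m % n : ℕ) : ZMod 2) = (m : ZMod 2) := by
  have h2 : ((n : ℕ) : ZMod 2) = 0 := (ZMod.natCast_eq_zero_iff n 2).2 hn
  conv_rhs => rw [← Nat.div_add_mod m n]
  push_cast
  rw [h2]
  ring

end Parity

/-! ### The two halves of the theorem -/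

section Main

variable {G : SimpleGraph V} {t : ℕ}

lemma part1 (hG : UniquelyCSat G t) (ht : 5 ≤ t) : ¬ HasCycleOn G (2 * t - 2) := by
  rintro ⟨r, w, hw, hl⟩
  have hn : 0 < 2 * t - 2 := by omega
  let c : Cyc G (2 * t - 2) := mkCyc w hw hl
  have hne : c.v 0 ≠ c.v (0 + (t - 1)) := by
    intro h
    have := c.veq_low hn (by omega) (by omega) h
    omega
  let p1 : G.Walk (c.v 0) (c.v (0 + (t - 1))) := c.arc 0 (t - 1)
  have hw1 : c.v ((t - 1) + (t - 1)) = c.v 0 :=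
    (congrArg c.v (by omega : (t - 1) + (t - 1) = 2 * t - 2)).trans c.vn
  have hw2 : c.v (t - 1) = c.v (0 + (t - 1)) := congrArg c.v (by omega)
  let p2 : G.Walk (c.v 0) (c.v (0 + (t - 1))) := ((c.arc (t - 1) (t - 1)).copy hw2 hw1).reverse
  have hp1 : p1.IsPath := c.arc_isPath (by omega) 0
  have hp2 : p2.IsPath := by
    simp only [p2, Walk.isPath_reverse_iff, Walk.isPath_copy]
    exact c.arc_isPath (by omega) (t - 1)
  have hp1len : p1.length = t - 1 := by simp [p1, c.arc_length]
  have hp2len : p2.length = t - 1 := by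
    simp [p2, Walk.length_reverse, Walk.length_copy, c.arc_length]
  have hed : s(c.v (0 + 0), c.v (0 + 0 + 1)) ∈ p1.edges := c.mem_arc_edges (by omega)
  have hned : s(c.v (0 + 0), c.v (0 + 0 + 1)) ∉ p2.edges := by
    intro h
    have h1 : c.v (0 + 0 + 1) ∈ p2.support := Walk.snd_mem_support_of_mem_edges _ h
    simp only [p2, Walk.support_reverse, Walk.support_copy, List.mem_reverse] at h1
    rw [c.mem_arc_support] at h1
    obtain ⟨j, hj, h1⟩ := h1
    norm_num at h1
    by_cases hc : (t - 1) + j < 2 * t - 2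
    · have := c.veq_low hn (by omega) hc h1
      omega
    · have h2 : (t - 1) + j = 2 * t - 2 := by omega
      rw [h2] at h1
      have := c.veq_low hn (by omega) (by omega) (h1.trans c.vn)
      omega
  exact no_two_paths hG ht hne p1 p2 hp1 hp2 hp1len hp2len _ hed hned

lemma part2 (hG : UniquelyCSat G t) (ht : 5 ≤ t) : ¬ HasCycleOn G (2 * t - 4) := by
  classical
  rintro ⟨r, w, hw, hl⟩
  set d := t - 2 with hd_def
  have htd : t = d + 2 := by omega
  have hd : 3 ≤ d := by omega
  have hl' : w.length = 2 * d := by omega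
  have hn : 0 < 2 * d := by omega
  have hdvd : (2 : ℕ) ∣ 2 * d := ⟨d, rfl⟩
  let c : Cyc G (2 * d) := mkCyc w hw hl'
  -- the two "antipodal" vertices
  have hne : c.v 0 ≠ c.v d := by
    intro h
    have := c.veq_low hn (by omega) (by omega) h
    omega
  have hnadj : ¬ G.Adj (c.v 0) (c.v d) := fun h =>
    kill_span hG ht c hd htd (by omega) (le_refl d) h
  obtain ⟨cs, hcs, -⟩ := hG.2 (c.v 0) (c.v d) hne hnadj
  obtain ⟨r', W, hWc, hWl, -⟩ := hcs
  by_cases he : s(c.v 0, c.v d) ∈ W.edges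
  · -- the added edge is used : parity contradiction
    -- every vertex of W lies on the cycle
    have hstep : ∀ a b, (G ⊔ fromEdgeSet {s(c.v 0, c.v d)}).Adj a b → c.onC a → c.onC b := by
      intro a b hab ha
      rw [sup_adj] at hab
      rcases hab with hab | hab
      · by_contra hb
        obtain ⟨i, hi, rfl⟩ := c.onC_norm hn ha
        have hb' : ∀ j, b ≠ (c.shift i).v j := by
          intro j hj
          exact hb ⟨i + j, hj⟩
        refine kill_out hG ht (c.shift i) hd htd hb' ?_
        have : (c.shift i).v 0 = c.v i := congrArg c.v (by omega)
        rw [this]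
        exact hab.symm
      · rw [fromEdgeSet_adj, Set.mem_singleton_iff, Sym2.eq_iff] at hab
        rcases hab.1 with ⟨-, rfl⟩ | ⟨-, rfl⟩
        · exact ⟨d, rfl⟩
        · exact ⟨0, rfl⟩
    have hv0W : c.v 0 ∈ W.support := Walk.fst_mem_support_of_mem_edges _ he
    set W0 := W.rotate _ hv0W with hW0_def
    have hW0c : W0.IsCycle := hWc.rotate hv0W
    have hperm : List.Perm W0.edges W.edges := (W.rotate_edges _ hv0W).perm
    have he0 : s(c.v 0, c.v d) ∈ W0.edges := hperm.mem_iff.2 he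
    have hW0len : W0.edges.length = t := by
      rw [hperm.length_eq, Walk.length_edges, hWl]
    have hWon : ∀ y ∈ W0.support, c.onC y :=
      support_closure _ hstep W0 ⟨0, rfl⟩
    -- a 2-coloring of the cycle by index parity
    set f : V → ZMod 2 := fun x =>
      if h : ∃ i, i < 2 * d ∧ x = c.v i then ((h.choose : ℕ) : ZMod 2) else 0 with hf_def
    have hf : ∀ i, i < 2 * d → f (c.v i) = (i : ZMod 2) := by
      intro i hi
      have hex : ∃ j, j < 2 * d ∧ c.v i = c.v j := ⟨i, hi, rfl⟩
      rw [hf_def]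
      simp only
      rw [dif_pos hex]
      obtain ⟨hlt, heq⟩ := hex.choose_spec
      have h2 := c.veq_low hn hi hlt heq
      rw [← h2]
    set wt : Sym2 V → ZMod 2 := fun e => if e = s(c.v 0, c.v d) then (d : ZMod 2) else 1
      with hwt_def
    have hpw : ∀ e ∈ W0.edges, ∀ x y : V, e = s(x, y) → f y = f x + wt e := by
      intro e heW x y hexy
      have hx : x ∈ W0.support := Walk.fst_mem_support_of_mem_edges _ (hexy ▸ heW)
      have hy : y ∈ W0.support := Walk.snd_mem_support_of_mem_edges _ (hexy ▸ heW)
      obtain ⟨i, hi, rfl⟩ := c.onC_norm hn (hWon x hx)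
      obtain ⟨j, hj, rfl⟩ := c.onC_norm hn (hWon y hy)
      by_cases hsp : e = s(c.v 0, c.v d)
      · have hwt1 : wt e = (d : ZMod 2) := by rw [hwt_def]; simp only; rw [if_pos hsp]
        have heq2 : s(c.v i, c.v j) = s(c.v 0, c.v d) := hexy.symm.trans hsp
        rw [Sym2.eq_iff] at heq2
        rw [hwt1, hf i hi, hf j hj]
        rcases heq2 with ⟨h1, h2⟩ | ⟨h1, h2⟩
        · have e1 := c.veq_low hn hi (by omega) h1
          have e2 := c.veq_low hn hj (by omega) h2
          rw [e1, e2]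
          push_cast
          ring
        · have e1 := c.veq_low hn hi (by omega) h1
          have e2 := c.veq_low hn hj (by omega) h2
          rw [e1, e2]
          have h4 : (d : ZMod 2) + (d : ZMod 2) = 0 := by
            rw [← two_mul]
            have h5 : (2 : ZMod 2) = 0 := rfl
            rw [h5, zero_mul]
          push_cast
          exact h4.symm
      · have hwt1 : wt e = 1 := by rw [hwt_def]; simp only; rw [if_neg hsp]
        have hadj' := W0.adj_of_mem_edges (hexy ▸ heW)
        rw [sup_adj] at hadj'
        rcases hadj' with hadj' | hadj'
        · have hclass := adj_classify hG ht c hd htd hi hj hadj'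
          rw [hf j hj, hf i hi, hwt1]
          rcases hclass with h1 | h1
          · rw [h1, cast_mod_two hdvd]
            push_cast
            ring
          · have h2 : ((i : ℕ) : ZMod 2) = ((j : ℕ) : ZMod 2) + 1 := by
              rw [h1, cast_mod_two hdvd]
              push_cast
              ring
            rw [h2, add_assoc]
            have h3 : (1 + 1 : ZMod 2) = 0 := rfl
            rw [h3, add_zero]
        · rw [fromEdgeSet_adj, Set.mem_singleton_iff] at hadj'
          exact absurd (hexy.trans hadj'.1) hsp
    have hsum := parity_walk f wt W0 hpw
    have hsum0 : ((W0.edges.map wt).sum) = 0 := (left_eq_add.1 hsum)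
    have hnd : W0.edges.Nodup := hW0c.isCircuit.isTrail.edges_nodup
    have hperm2 : List.Perm W0.edges (s(c.v 0, c.v d) :: (W0.edges.erase (s(c.v 0, c.v d)))) :=
      List.perm_cons_erase he0
    have hsum2 : (W0.edges.map wt).sum
        = wt (s(c.v 0, c.v d)) + ((W0.edges.erase (s(c.v 0, c.v d))).map wt).sum := by
      rw [(hperm2.map wt).sum_eq, List.map_cons, List.sum_cons]
    have hrest : ((W0.edges.erase (s(c.v 0, c.v d))).map wt).sum
        = (((W0.edges.erase (s(c.v 0, c.v d))).length : ℕ) : ZMod 2) := by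
      refine sum_map_ones wt _ ?_
      intro x hx
      have hx' := (List.Nodup.mem_erase_iff hnd).1 hx
      rw [hwt_def]
      simp only
      rw [if_neg hx'.1]
    have hlen_erase : (W0.edges.erase (s(c.v 0, c.v d))).length = t - 1 := by
      rw [List.length_erase_of_mem he0, hW0len]
    have hwt_special : wt (s(c.v 0, c.v d)) = (d : ZMod 2) := by
      simp [hwt_def]
    rw [hsum2, hrest, hlen_erase, hwt_special] at hsum0
    have ht1 : ((t - 1 : ℕ) : ZMod 2) = (d : ZMod 2) + 1 := by
      have h5 : (t - 1 : ℕ) = d + 1 := by omega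
      rw [h5]
      push_cast
      ring
    rw [ht1] at hsum0
    have hfin : (d : ZMod 2) + ((d : ZMod 2) + 1) = 1 := by
      rw [← add_assoc, ← two_mul]
      have h5 : (2 : ZMod 2) = 0 := rfl
      rw [h5, zero_mul, zero_add]
    rw [hfin] at hsum0
    exact one_ne_zero hsum0
  · -- the added edge is unused : a `t`-cycle already in `G`
    have hsub : ∀ e ∈ W.edges, e ∈ G.edgeSet := by
      intro e heW
      have h1 := W.edges_subset_edgeSet heW
      rw [edgeSet_sup, edgeSet_fromEdgeSet] at h1
      rcases h1 with h1 | h1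
      · exact h1
      · rw [Set.mem_diff, Set.mem_singleton_iff] at h1
        exact absurd (h1.1 ▸ heW) he
    exact hG.1 ⟨r', W.transfer G hsub, hWc.transfer _, by rw [Walk.length_transfer]; omega⟩

end Main

end UCSatProof

/-- For `t ≥ 5`, a uniquely `C_t`-saturated graph contains no cycle of length `2t - 2`
and no cycle of length `2t - 4`. -/
theorem stmt_6 {V : Type*} [Fintype V] (G : SimpleGraph V) (t : ℕ) (ht : 5 ≤ t)
    (hG : UniquelyCSat G t) :
    ¬ HasCycleOn G (2 * t - 2) ∧ ¬ HasCycleOn G (2 * t - 4) :=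
  ⟨UCSatProof.part1 hG ht, UCSatProof.part2 hG ht⟩
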